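/- For n ≥ 4, the chromatic number of the hypergraph whose vertices are the edges of the complete graph K_n and whose hyperedges are the 4-element sets of edges forming a subgraph of maximum degree at most 2 equals n - ⌊√(2n + 1/4) - 1/2⌋. -/

import Mathlib

open Finset

set_option maxHeartbeats 1000000

lemma pair_eq {α : Type*} [DecidableEq α] {A : Finset α} {x y : α} (h2 : A.card = 2)
    (hx : x ∈ A) (hy : y ∈ A) (hxy : x ≠ y) : A = {x, y} := by
  refine (Finset.eq_of_subset_of_card_le ?_ ?_).symm
  · intro z hz; simp at hz; rcases hz with rfl | rfl <;> assumption
  · rw [h2, Finset.card_insert_of_notMem (by simpa using hxy), Finset.card_singleton]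

lemma card_filter_fin4_le_two {n : ℕ} (A : Fin 4 → Finset (Fin n)) (v : Fin n)
    (h01 : ¬ (v ∈ A 0 ∧ v ∈ A 1))
    (h23 : ¬ (v ∈ A 2 ∧ v ∈ A 3 ∧ (v ∈ A 0 ∨ v ∈ A 1))) :
    (Finset.univ.filter fun j => v ∈ A j).card ≤ 2 := by
  rw [Finset.card_filter, Fin.sum_univ_four]
  split_ifs <;> first | omega | (exfalso; tauto)

lemma inj4 {α : Type*} {e f g h : α} (hef : e ≠ f) (heg : e ≠ g) (heh : e ≠ h)
    (hfg : f ≠ g) (hfh : f ≠ h) (hgh : g ≠ h) : Function.Injective ![e, f, g, h] := by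
  intro a b hab
  fin_cases a <;> fin_cases b <;> simp_all

lemma structure_lemma {n : ℕ} (C : Finset (Finset (Fin n)))
    (hcard : ∀ A ∈ C, A.card = 2)
    (hnb : ∀ A : Fin 4 → Finset (Fin n), (∀ j, A j ∈ C) → Function.Injective A →
      (∀ v : Fin n, (Finset.univ.filter fun j => v ∈ A j).card ≤ 2) → False) :
    C.card ≤ 3 ∨ ∃ v : Fin n, (C.filter fun A => v ∉ A).card ≤ 1 := by
  by_contra hcon
  push_neg at hcon
  obtain ⟨hC4, havoid⟩ := hcon
  by_cases hdisj : ∃ e ∈ C, ∃ f ∈ C, e ∩ f = ∅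
  · obtain ⟨e, heC, f, hfC, hef0⟩ := hdisj
    have hef : e ≠ f := by
      intro h; subst h
      have := hcard e heC
      rw [Finset.inter_self] at hef0
      simp [hef0] at this
    have hnotef : ∀ v : Fin n, v ∈ e → v ∈ f → False := by
      intro v hv hv'
      have : v ∈ e ∩ f := Finset.mem_inter.mpr ⟨hv, hv'⟩
      simp [hef0] at this
    -- key pairwise intersection property
    have key : ∀ g ∈ C, ∀ h ∈ C, g ≠ e → g ≠ f → h ≠ e → h ≠ f → g ≠ h →
        ∃ x, x ∈ g ∧ x ∈ h ∧ x ∈ e ∪ f := by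
      intro g hgC h hhC hge hgf hhe hhf hgh
      by_contra hno
      push_neg at hno
      refine hnb ![e, f, g, h] ?_ (inj4 hef (Ne.symm hge) (Ne.symm hhe) (Ne.symm hgf) (Ne.symm hhf) hgh) ?_
      · intro j; fin_cases j <;> simpa
      · intro v
        apply card_filter_fin4_le_two
        · simp only [Matrix.cons_val_zero, Matrix.cons_val_one, Matrix.head_cons]
          intro ⟨h1, h2⟩; exact hnotef v h1 h2
        · simp only [Matrix.cons_val_zero, Matrix.cons_val_one, Matrix.head_cons,
            Matrix.cons_val_two, Matrix.cons_val_three, Matrix.tail_cons]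
          rintro ⟨h1, h2, h3⟩
          exact hno v h1 h2 (Finset.mem_union.mpr h3)
    -- helper: no member other than e,f has two points in e (or in f)
    have key2 : ∀ p ∈ C, p ≠ e → p ≠ f → ∀ u w : Fin n, u ∈ p → w ∈ p → u ≠ w →
        (¬ (u ∈ e ∧ w ∈ e)) ∧ (¬ (u ∈ f ∧ w ∈ f)) := by
      intro p hp hpe hpf u w hu hw huw
      constructor
      · rintro ⟨h1, h2⟩
        exact hpe ((pair_eq (hcard p hp) hu hw huw).trans (pair_eq (hcard e heC) h1 h2 huw).symm)
      · rintro ⟨h1, h2⟩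
        exact hpf ((pair_eq (hcard p hp) hu hw huw).trans (pair_eq (hcard f hfC) h1 h2 huw).symm)
    by_cases hstar : ∃ x ∈ e ∪ f, ∀ g ∈ C \ {e, f}, x ∈ g
    · obtain ⟨x, hx, hall⟩ := hstar
      have hsub : (C.filter fun A => x ∉ A) ⊆ (if x ∈ e then {f} else {e}) := by
        intro g hg
        rw [Finset.mem_filter] at hg
        obtain ⟨hgC, hxg⟩ := hg
        have hgef : g = e ∨ g = f := by
          by_contra hcontra
          push_neg at hcontra
          exact hxg (hall g (Finset.mem_sdiff.mpr ⟨hgC, by simp [hcontra.1, hcontra.2]⟩))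
        rcases Finset.mem_union.mp hx with hxe | hxf
        · rw [if_pos hxe]
          rcases hgef with rfl | rfl
          · exact absurd hxe hxg
          · simp
        · have hxe : x ∉ e := fun h => hnotef x h hxf
          rw [if_neg hxe]
          rcases hgef with rfl | rfl
          · simp
          · exact absurd hxf hxg
      have hle : (C.filter fun A => x ∉ A).card ≤ 1 := by
        refine (Finset.card_le_card hsub).trans ?_
        split_ifs <;> simp
      have := havoid x
      omega
    · push_neg at hstar
      have hcard2 : 1 < (C \ {e, f}).card := by
        have hsub : ({e, f} : Finset (Finset (Fin n))) ⊆ C := by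
          intro z hz; simp at hz; rcases hz with rfl | rfl <;> assumption
        have := Finset.card_sdiff_add_card_eq_card hsub
        have h2 : ({e, f} : Finset (Finset (Fin n))).card = 2 := by
          rw [Finset.card_insert_of_notMem (by simpa using hef), Finset.card_singleton]
        omega
      obtain ⟨g, hg, h, hh, hgh⟩ := Finset.one_lt_card.mp hcard2
      rw [Finset.mem_sdiff] at hg hh
      have hge : g ≠ e := fun h' => hg.2 (by simp [h'])
      have hgf : g ≠ f := fun h' => hg.2 (by simp [h'])
      have hhe : h ≠ e := fun h' => hh.2 (by simp [h'])
      have hhf : h ≠ f := fun h' => hh.2 (by simp [h'])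
      obtain ⟨x, hxg, hxh, hxef⟩ := key g hg.1 h hh.1 hge hgf hhe hhf hgh
      obtain ⟨i, hi, hxi⟩ := hstar x hxef
      rw [Finset.mem_sdiff] at hi
      have hie : i ≠ e := fun h' => hi.2 (by simp [h'])
      have hif : i ≠ f := fun h' => hi.2 (by simp [h'])
      have hig : i ≠ g := fun h' => hxi (h' ▸ hxg)
      have hih : i ≠ h := fun h' => hxi (h' ▸ hxh)
      obtain ⟨y, hyi, hyg, hyef⟩ := key i hi.1 g hg.1 hie hif hge hgf hig
      obtain ⟨z, hzi, hzh, hzef⟩ := key i hi.1 h hh.1 hie hif hhe hhf hih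
      have hyx : y ≠ x := fun h' => hxi (h' ▸ hyi)
      have hzx : z ≠ x := fun h' => hxi (h' ▸ hzi)
      have hyz : y ≠ z := by
        rintro rfl
        exact hgh ((pair_eq (hcard g hg.1) hxg hyg hyx.symm).trans
          (pair_eq (hcard h hh.1) hxh hzh hyx.symm).symm)
      have k1 := key2 g hg.1 hge hgf x y hxg hyg hyx.symm
      have k2 := key2 h hh.1 hhe hhf x z hxh hzh hzx.symm
      have k3 := key2 i hi.1 hie hif y z hyi hzi hyz
      rw [Finset.mem_union] at hxef hyef hzef
      rcases hxef with hxe | hxf <;> rcases hyef with hye | hyf <;> rcases hzef with hze | hzf <;>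
        first
          | exact k1.1 ⟨by assumption, by assumption⟩
          | exact k1.2 ⟨by assumption, by assumption⟩
          | exact k2.1 ⟨by assumption, by assumption⟩
          | exact k2.2 ⟨by assumption, by assumption⟩
          | exact k3.1 ⟨by assumption, by assumption⟩
          | exact k3.2 ⟨by assumption, by assumption⟩
  · -- all pairwise intersecting
    push_neg at hdisj
    have hint : ∀ g ∈ C, ∀ h ∈ C, ∃ x, x ∈ g ∧ x ∈ h := by
      intro g hg h hh
      obtain ⟨x, hx⟩ := hdisj g hg h hh
      exact ⟨x, Finset.mem_inter.mp hx⟩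
    by_cases hstar : ∃ x : Fin n, ∀ g ∈ C, x ∈ g
    · obtain ⟨x, hall⟩ := hstar
      have : (C.filter fun A => x ∉ A) = ∅ := by
        rw [Finset.filter_eq_empty_iff]
        intro A hA
        simp [hall A hA]
      have h0 := havoid x
      rw [this] at h0
      simp at h0
    · push_neg at hstar
      obtain ⟨g, hg, h, hh, hgh⟩ := Finset.one_lt_card.mp (by omega : 1 < C.card)
      obtain ⟨x, hxg, hxh⟩ := hint g hg h hh
      obtain ⟨i, hiC, hxi⟩ := hstar x
      have hig : i ≠ g := fun h' => hxi (h' ▸ hxg)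
      have hih : i ≠ h := fun h' => hxi (h' ▸ hxh)
      obtain ⟨y, hyi, hyg⟩ := hint i hiC g hg
      obtain ⟨z, hzi, hzh⟩ := hint i hiC h hh
      have hyx : y ≠ x := fun h' => hxi (h' ▸ hyi)
      have hzx : z ≠ x := fun h' => hxi (h' ▸ hzi)
      have hyz : y ≠ z := by
        rintro rfl
        exact hgh ((pair_eq (hcard g hg) hxg hyg hyx.symm).trans
          (pair_eq (hcard h hh) hxh hzh hyx.symm).symm)
      have hgeq : g = {x, y} := pair_eq (hcard g hg) hxg hyg hyx.symm
      have hheq : h = {x, z} := pair_eq (hcard h hh) hxh hzh hzx.symm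
      have hieq : i = {y, z} := pair_eq (hcard i hiC) hyi hzi hyz
      -- get a fourth member
      have hne : (C \ {g, h, i}).Nonempty := by
        rw [Finset.sdiff_nonempty]
        intro hsub
        have := Finset.card_le_card hsub
        have h3 : ({g, h, i} : Finset (Finset (Fin n))).card ≤ 3 := by
          apply (Finset.card_insert_le _ _).trans
          have := Finset.card_insert_le h ({i} : Finset (Finset (Fin n)))
          simp at this ⊢
          omega
        omega
      obtain ⟨j, hj⟩ := hne
      rw [Finset.mem_sdiff] at hj
      have hjC := hj.1
      have hjg : j ≠ g := fun h' => hj.2 (by simp [h'])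
      have hjh : j ≠ h := fun h' => hj.2 (by simp [h'])
      have hji : j ≠ i := fun h' => hj.2 (by simp [h'])
      by_cases hxj : x ∈ j
      · obtain ⟨w, hwj, hwi⟩ := hint j hjC i hiC
        rw [hieq] at hwi
        simp at hwi
        rcases hwi with rfl | rfl
        · exact hjg ((pair_eq (hcard j hjC) hxj hwj hyx.symm).trans hgeq.symm)
        · exact hjh ((pair_eq (hcard j hjC) hxj hwj hzx.symm).trans hheq.symm)
      · obtain ⟨w1, hw1j, hw1g⟩ := hint j hjC g hg
        obtain ⟨w2, hw2j, hw2h⟩ := hint j hjC h hh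
        rw [hgeq] at hw1g
        rw [hheq] at hw2h
        simp at hw1g hw2h
        rcases hw1g with rfl | rfl
        · exact hxj hw1j
        rcases hw2h with rfl | rfl
        · exact hxj hw2j
        exact hji ((pair_eq (hcard j hjC) hw1j hw2j hyz).trans hieq.symm)

lemma two_mul_choose_two (k : ℕ) : 2 * k.choose 2 = k * (k - 1) := by
  cases k with
  | zero => simp
  | succ m =>
    rw [Nat.choose_two_right, Nat.mul_div_cancel']
    simpa [Nat.mul_comm] using (Nat.even_mul_succ_self m).two_dvd

lemma lower_bound {n t m : ℕ} (hn : 4 ≤ n) (ht1 : 1 ≤ t) (ht2 : 2 * n < (t + 1) * (t + 2))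
    (c : Finset (Fin n) → Fin m)
    (hc : ∀ A : Fin 4 → Finset (Fin n), (∀ j, (A j).card = 2) → Function.Injective A →
      (∀ v : Fin n, (Finset.univ.filter fun j => v ∈ A j).card ≤ 2) →
      ∃ j j', c (A j) ≠ c (A j')) :
    n - t ≤ m := by
  classical
  by_contra hcon
  push_neg at hcon
  have hmn : m + t < n := by omega
  set CL : Fin m → Finset (Finset (Fin n)) :=
    fun k => ((Finset.univ : Finset (Fin n)).powersetCard 2).filter (fun A => c A = k) with hCL
  set P : Fin m → Prop := fun k => ∃ v : Fin n, ((CL k).filter fun A => v ∉ A).card ≤ 1 with hPdef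
  have hP3 : ∀ k, ¬ P k → (CL k).card ≤ 3 := by
    intro k hk
    have hnbk : ∀ A : Fin 4 → Finset (Fin n), (∀ j, A j ∈ CL k) → Function.Injective A →
        (∀ v : Fin n, (Finset.univ.filter fun j => v ∈ A j).card ≤ 2) → False := by
      intro A hAmem hAinj hAdeg
      obtain ⟨j, j', hjj⟩ := hc A
        (fun j => (Finset.mem_powersetCard.mp (Finset.mem_filter.mp (hAmem j)).1).2)
        hAinj hAdeg
      have h1 := (Finset.mem_filter.mp (hAmem j)).2
      have h2 := (Finset.mem_filter.mp (hAmem j')).2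
      exact hjj (h1.trans h2.symm)
    rcases structure_lemma (CL k)
      (fun A hA => ((Finset.mem_powersetCard.mp (Finset.mem_filter.mp hA).1).2))
      hnbk with h3 | hv
    · exact h3
    · exact absurd hv hk
  set vc : Fin m → Fin n := fun k => if h : P k then h.choose else ⟨0, by omega⟩ with hvc
  set S : Finset (Fin n) := (Finset.univ.filter P).image vc with hS
  set D : Finset (Finset (Fin n)) :=
    ((Finset.univ : Finset (Fin n)) \ S).powersetCard 2 with hD
  have hDcard : D.card = (n - S.card).choose 2 := by
    rw [hD, Finset.card_powersetCard, Finset.card_sdiff_of_subset (Finset.subset_univ S),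
      Finset.card_univ, Fintype.card_fin]
  have hDsum : D.card = ∑ k ∈ Finset.univ, (D.filter (fun A => c A = k)).card :=
    Finset.card_eq_sum_card_fiberwise (fun A _ => Finset.mem_univ _)
  have hfiber : ∀ k, (D.filter (fun A => c A = k)).card ≤ if P k then 1 else 3 := by
    intro k
    have hsubCL : D.filter (fun A => c A = k) ⊆ CL k := by
      intro A hA
      rw [Finset.mem_filter] at hA ⊢
      refine ⟨?_, hA.2⟩
      have := Finset.mem_powersetCard.mp hA.1
      exact Finset.mem_powersetCard.mpr ⟨Finset.subset_univ _, this.2⟩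
    split_ifs with h
    · have hspec := h.choose_spec
      have hvS : vc k ∈ S := Finset.mem_image.mpr
        ⟨k, Finset.mem_filter.mpr ⟨Finset.mem_univ _, h⟩, rfl⟩
      have hvck : vc k = h.choose := dif_pos h
      refine le_trans (Finset.card_le_card ?_) hspec
      intro A hA
      rw [Finset.mem_filter] at hA ⊢
      refine ⟨hsubCL (Finset.mem_filter.mpr hA), ?_⟩
      intro hmem
      have hAD := Finset.mem_powersetCard.mp hA.1
      have := hAD.1 hmem
      rw [Finset.mem_sdiff] at this
      exact this.2 (hvck ▸ hvS)
    · exact le_trans (Finset.card_le_card hsubCL) (hP3 k h)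
  set a : ℕ := (Finset.univ.filter P).card with ha
  set b : ℕ := (Finset.univ.filter (fun k => ¬ P k)).card with hb
  have hab : a + b = m := by
    rw [ha, hb, Finset.card_filter_add_card_filter_not, Finset.card_univ,
      Fintype.card_fin]
  have hsa : S.card ≤ a := Finset.card_image_le
  have hsum : D.card ≤ a * 1 + b * 3 := by
    rw [hDsum]
    calc ∑ k ∈ Finset.univ, (D.filter (fun A => c A = k)).card
        ≤ ∑ k ∈ Finset.univ, (if P k then 1 else 3) := Finset.sum_le_sum (fun k _ => hfiber k)
      _ = a * 1 + b * 3 := by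
          rw [Finset.sum_ite, Finset.sum_const, Finset.sum_const, smul_eq_mul, smul_eq_mul]
  -- now numeric contradiction
  set s : ℕ := S.card with hs
  set K : ℕ := n - s with hK
  have hsm : s ≤ m := le_trans hsa (by omega)
  have hKs : K + s = n := by omega
  have hKt : t + 1 ≤ K := by omega
  have hchoose : K * (K - 1) ≤ 2 * a + 6 * b := by
    have h1 := two_mul_choose_two K
    have h2 : K.choose 2 ≤ a * 1 + b * 3 := by rw [← hDcard]; exact hsum
    omega
  have hcast : (K : ℤ) * ((K : ℤ) - 1) ≤ 2 * (a : ℤ) + 6 * (b : ℤ) := by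
    have h1 : ((K * (K - 1) : ℕ) : ℤ) ≤ ((2 * a + 6 * b : ℕ) : ℤ) := by exact_mod_cast hchoose
    push_cast [Nat.cast_sub (show 1 ≤ K by omega)] at h1
    linarith
  have c1 : (a : ℤ) + (b : ℤ) = (m : ℤ) := by exact_mod_cast hab
  have c2 : (s : ℤ) ≤ (a : ℤ) := by exact_mod_cast hsa
  have c3 : (K : ℤ) + (s : ℤ) = (n : ℤ) := by exact_mod_cast hKs
  have c4 : (m : ℤ) + (t : ℤ) + 1 ≤ (n : ℤ) := by exact_mod_cast hmn
  have c5 : 2 * (n : ℤ) < ((t : ℤ) + 1) * ((t : ℤ) + 2) := by exact_mod_cast ht2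
  have c6 : (t : ℤ) + 1 ≤ (K : ℤ) := by exact_mod_cast hKt
  have c7 : (1 : ℤ) ≤ (t : ℤ) := by exact_mod_cast ht1
  nlinarith [mul_nonneg (by linarith : (0:ℤ) ≤ (K:ℤ) - (t:ℤ) - 1)
      (by linarith : (0:ℤ) ≤ 2*(t:ℤ) - 1),
    sq_nonneg ((K:ℤ) - (t:ℤ) - 1)]

lemma upper_bound {n t : ℕ} (hn : 4 ≤ n) (ht1 : 1 ≤ t) (htn : t < n)
    (ht : t * (t + 1) ≤ 2 * n) :
    ∃ c : Finset (Fin n) → Fin (n - t),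
      ∀ A : Fin 4 → Finset (Fin n), (∀ j, (A j).card = 2) → Function.Injective A →
        (∀ v : Fin n, (Finset.univ.filter fun j => v ∈ A j).card ≤ 2) →
        ∃ j j', c (A j) ≠ c (A j') := by
  classical
  have hnt : 0 < n - t := by omega
  set top : Finset (Fin n) := Finset.univ.filter (fun x => ¬ x.val < n - t) with htop
  have htopcard : top.card = t := by
    have hlo : (Finset.univ.filter (fun x : Fin n => x.val < n - t)) =
        Finset.Iio (⟨n - t, by omega⟩ : Fin n) := by
      ext x
      simp [Fin.lt_def]
    have hsum := Finset.card_filter_add_card_filter_not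
      (s := (Finset.univ : Finset (Fin n))) (p := fun x : Fin n => x.val < n - t)
    rw [hlo] at hsum
    rw [Fin.card_Iio, Finset.card_univ, Fintype.card_fin] at hsum
    simp only [Fin.val_mk] at hsum
    simp only [htop]
    omega
  set E : Finset (Finset (Fin n)) := top.powersetCard 2 with hE
  have hEcard : E.card = t.choose 2 := by rw [hE, Finset.card_powersetCard, htopcard]
  have hEle : E.card ≤ n - t := by
    have h1 := two_mul_choose_two t
    have h2 : t * (t - 1) + 2 * t = t * (t + 1) := by
      have h3 : t + 1 = (t - 1) + 2 := by omega
      rw [h3, Nat.mul_add]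
      ring
    omega
  set φ : Finset (Fin n) → Fin (n - t) := fun A =>
    if h : A ∈ E then Fin.castLE hEle (E.equivFin ⟨A, h⟩) else ⟨0, hnt⟩ with hφ
  have hφinj : ∀ A ∈ E, ∀ B ∈ E, φ A = φ B → A = B := by
    intro A hA B hB hAB
    rw [hφ] at hAB
    simp only [dif_pos hA, dif_pos hB] at hAB
    have := Fin.castLE_injective hEle hAB
    have := E.equivFin.injective this
    exact congrArg Subtype.val this
  set c : Finset (Fin n) → Fin (n - t) := fun A =>
    if h : ∃ x ∈ A, x.val < n - t then
      ⟨(A.min' ⟨h.choose, h.choose_spec.1⟩).val, by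
        obtain ⟨x, hx, hlt⟩ := h
        exact lt_of_le_of_lt (Fin.le_def.mp (Finset.min'_le A x hx)) hlt⟩
    else φ A with hcdef
  refine ⟨c, ?_⟩
  intro A hA2 hAinj hAdeg
  by_contra hcon
  push_neg at hcon
  have hkall : ∀ j, c (A j) = c (A 0) := fun j => hcon j 0
  set k : Fin (n - t) := c (A 0) with hk
  have hcneg : ∀ B, ¬ (∃ x ∈ B, x.val < n - t) → c B = φ B := fun B h => dif_neg h
  have hcpos : ∀ B (hx : ∃ x ∈ B, x.val < n - t) (hne : B.Nonempty),
      (c B).val = (B.min' hne).val := by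
    intro B hx hne
    simp only [hcdef, dif_pos hx]
  -- the complement of J has at most one element
  have hJc : (Finset.univ.filter (fun j : Fin 4 => ¬ ∃ x ∈ A j, x.val < n - t)).card ≤ 1 := by
    rw [Finset.card_le_one]
    intro j hj j' hj'
    rw [Finset.mem_filter] at hj hj'
    have hmemE : ∀ i : Fin 4, ¬ (∃ x ∈ A i, x.val < n - t) → A i ∈ E := by
      intro i hi
      push_neg at hi
      rw [hE, Finset.mem_powersetCard]
      exact ⟨fun x hx => Finset.mem_filter.mpr ⟨Finset.mem_univ _, by simpa using hi x hx⟩,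
        hA2 i⟩
    have e1 : φ (A j) = φ (A j') := by
      rw [← hcneg _ hj.2, ← hcneg _ hj'.2, hkall j, hkall j']
    exact hAinj (hφinj _ (hmemE j hj.2) _ (hmemE j' hj'.2) e1)
  have hJcard : 3 ≤ (Finset.univ.filter (fun j : Fin 4 => ∃ x ∈ A j, x.val < n - t)).card := by
    have := Finset.card_filter_add_card_filter_not
      (s := (Finset.univ : Finset (Fin 4))) (p := fun j : Fin 4 => ∃ x ∈ A j, x.val < n - t)
    rw [Finset.card_univ, Fintype.card_fin] at this
    omega
  set v : Fin n := ⟨k.val, lt_of_lt_of_le k.isLt (by omega)⟩ with hv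
  have hvmem : ∀ j : Fin 4, (∃ x ∈ A j, x.val < n - t) → v ∈ A j := by
    intro j hj
    have hne : (A j).Nonempty := by
      obtain ⟨x, hx, _⟩ := hj
      exact ⟨x, hx⟩
    have h1 := hcpos (A j) hj hne
    rw [hkall j] at h1
    have : (A j).min' hne = v := by
      apply Fin.ext
      simp [hv, ← h1]
    rw [← this]
    exact Finset.min'_mem _ _
  have hsub : (Finset.univ.filter (fun j : Fin 4 => ∃ x ∈ A j, x.val < n - t)) ⊆
      (Finset.univ.filter fun j => v ∈ A j) := by
    intro j hj
    rw [Finset.mem_filter] at hj ⊢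
    exact ⟨hj.1, hvmem j hj.2⟩
  have := (hAdeg v)
  have := Finset.card_le_card hsub
  omega

/-- For `n ≥ 4`, the chromatic number of the hypergraph `KG⁴_{(2,…,2)}([n] choose 2)`
— vertices are the `2`-subsets of `[n]` (edges of `K_n`), and four distinct
`2`-subsets form a hyperedge iff every vertex of `[n]` lies in at most `2` of them
(a subgraph of maximum degree `≤ 2`) — equals `n - ⌊√(2n + 1/4) - 1/2⌋`. -/
theorem chromatic_KG4 (n : ℕ) (hn : 4 ≤ n) :
    ((sInf {m : ℕ | ∃ c : Finset (Fin n) → Fin m,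
        ∀ A : Fin 4 → Finset (Fin n), (∀ j, (A j).card = 2) →
          Function.Injective A →
          (∀ v : Fin n, (Finset.univ.filter fun j => v ∈ A j).card ≤ 2) →
          ∃ j j', c (A j) ≠ c (A j')} : ℕ) : ℤ)
      = (n : ℤ) - ⌊Real.sqrt (2 * (n : ℝ) + 1 / 4) - 1 / 2⌋ := by
  classical
  set t : ℕ := Nat.findGreatest (fun u => u * (u + 1) ≤ 2 * n) (2 * n) with htdef
  have ht2 : 2 ≤ t := Nat.le_findGreatest (by omega) (show 2 * (2 + 1) ≤ 2 * n by omega)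
  have hts : t * (t + 1) ≤ 2 * n := by
    have h := Nat.findGreatest_spec (P := fun u => u * (u + 1) ≤ 2 * n) (m := 2)
      (n := 2 * n) (by omega) (show 2 * (2 + 1) ≤ 2 * n by omega)
    exact h
  have htn : t < n := by
    by_contra hcontra
    push_neg at hcontra
    have h1 : n * (n + 1) ≤ t * (t + 1) := Nat.mul_le_mul hcontra (by omega)
    nlinarith
  have hmax : 2 * n < (t + 1) * (t + 2) := by
    have h1 : ¬ ((t + 1) * ((t + 1) + 1) ≤ 2 * n) :=
      Nat.findGreatest_is_greatest (P := fun u => u * (u + 1) ≤ 2 * n) (n := 2 * n)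
        (k := t + 1) (by rw [← htdef]; omega) (by omega)
    push_neg at h1
    calc 2 * n < (t + 1) * (t + 1 + 1) := h1
      _ = (t + 1) * (t + 2) := by ring
  -- the chromatic number equals n - t
  have hsinf : sInf {m : ℕ | ∃ c : Finset (Fin n) → Fin m,
      ∀ A : Fin 4 → Finset (Fin n), (∀ j, (A j).card = 2) →
        Function.Injective A →
        (∀ v : Fin n, (Finset.univ.filter fun j => v ∈ A j).card ≤ 2) →
        ∃ j j', c (A j) ≠ c (A j')} = n - t := by
    have hmem : (n - t) ∈ {m : ℕ | ∃ c : Finset (Fin n) → Fin m,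
        ∀ A : Fin 4 → Finset (Fin n), (∀ j, (A j).card = 2) →
          Function.Injective A →
          (∀ v : Fin n, (Finset.univ.filter fun j => v ∈ A j).card ≤ 2) →
          ∃ j j', c (A j) ≠ c (A j')} := upper_bound hn (by omega) htn hts
    refine le_antisymm (Nat.sInf_le hmem) (le_csInf ⟨_, hmem⟩ ?_)
    rintro m ⟨c, hc⟩
    exact lower_bound hn (by omega) hmax c hc
  rw [hsinf]
  have hfloor : ⌊Real.sqrt (2 * (n : ℝ) + 1 / 4) - 1 / 2⌋ = (t : ℤ) := by
    rw [Int.floor_eq_iff]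
    constructor
    · have hsqrt1 : ((t : ℝ) + 1 / 2) ≤ Real.sqrt (2 * (n : ℝ) + 1 / 4) := by
        rw [Real.le_sqrt (by positivity) (by positivity)]
        have h : ((t * (t + 1) : ℕ) : ℝ) ≤ ((2 * n : ℕ) : ℝ) := by exact_mod_cast hts
        push_cast at h
        nlinarith
      push_cast
      linarith
    · have hsqrt2 : Real.sqrt (2 * (n : ℝ) + 1 / 4) < (t : ℝ) + 3 / 2 := by
        rw [Real.sqrt_lt' (by positivity)]
        have h : ((2 * n : ℕ) : ℝ) < (((t + 1) * (t + 2) : ℕ) : ℝ) := by exact_mod_cast hmax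
        push_cast at h
        nlinarith
      push_cast
      linarith
  rw [hfloor, Nat.cast_sub htn.le]
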